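/- Let a ≥ 0, b > 0, σ > 0, and let ν be a measure on (0,∞) with ∫_0^∞ (z∧1) ν(dz) < ∞ and ∫_{(1,∞)} log z ν(dz) < ∞. Define, for x ≥ 0, (AV)(x) := (a − bx)/(1+x) − σ²x/(2(1+x)²) + ∫_0^∞ log(1 + z/(1+x)) ν(dz). Then the function AV is bounded on [0,∞), and AV(x) → −b as x → ∞. -/

import Mathlib

open MeasureTheory Filter Set
open scoped ENNReal

/-- The generator of the jump-diffusion CIR process applied to the Foster-Lyapunov
function `V(x) = log(1+x)`. -/
noncomputable def AV (a b σ : ℝ) (ν : Measure ℝ) (x : ℝ) : ℝ :=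
  (a - b * x) / (1 + x) - σ ^ 2 * x / (2 * (1 + x) ^ 2) +
    ∫ z in Set.Ioi (0 : ℝ), Real.log (1 + z / (1 + x)) ∂ν

noncomputable def Gfun (z : ℝ) : ℝ :=
  (1 + Real.log 2) * min z 1 + Set.indicator (Set.Ioi 1) Real.log z

lemma Gfun_integrable (ν : Measure ℝ)
    (hν : ∫⁻ z in Set.Ioi (0 : ℝ), ENNReal.ofReal (min z 1) ∂ν < ⊤)
    (hνlog : ∫⁻ z in Set.Ioi (1 : ℝ), ENNReal.ofReal (Real.log z) ∂ν < ⊤) :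
    Integrable Gfun (ν.restrict (Set.Ioi 0)) := by
  apply Integrable.add
  · apply Integrable.const_mul
    refine ⟨(measurable_id.min measurable_const).aestronglyMeasurable, ?_⟩
    rw [hasFiniteIntegral_iff_ofReal]
    · exact hν
    · exact (ae_restrict_iff' measurableSet_Ioi).2 (ae_of_all _ fun z hz => by
        simp only [Set.mem_Ioi] at hz; positivity)
  · rw [integrable_indicator_iff measurableSet_Ioi]
    unfold IntegrableOn
    rw [Measure.restrict_restrict measurableSet_Ioi,
      Set.inter_eq_self_of_subset_left (Set.Ioi_subset_Ioi zero_le_one)]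
    refine ⟨Real.measurable_log.aestronglyMeasurable, ?_⟩
    rw [hasFiniteIntegral_iff_ofReal]
    · exact hνlog
    · exact (ae_restrict_iff' measurableSet_Ioi).2 (ae_of_all _ fun z hz =>
        Real.log_nonneg (le_of_lt (Set.mem_Ioi.mp hz)))

lemma Gfun_bound {z x : ℝ} (hz : 0 < z) (hx : 0 ≤ x) :
    |Real.log (1 + z / (1 + x))| ≤ Gfun z := by
  have h1x : (0:ℝ) < 1 + x := by linarith
  have hdiv : 0 ≤ z / (1 + x) := div_nonneg hz.le h1x.le
  have hdiv' : z / (1 + x) ≤ z := by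
    rw [div_le_iff₀ h1x]; nlinarith
  have hnn : 0 ≤ Real.log (1 + z / (1 + x)) := Real.log_nonneg (by linarith)
  rw [abs_of_nonneg hnn]
  have hle : Real.log (1 + z / (1 + x)) ≤ Real.log (1 + z) :=
    Real.log_le_log (by linarith) (by linarith)
  refine hle.trans ?_
  unfold Gfun
  rcases le_or_gt z 1 with h | h
  · rw [min_eq_left h, Set.indicator_of_notMem (by simpa using h)]
    have h2 : Real.log (1 + z) ≤ z := by
      have := Real.log_le_sub_one_of_pos (show (0:ℝ) < 1 + z by linarith)
      linarith
    have hl2 : 0 ≤ Real.log 2 := Real.log_nonneg (by norm_num)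
    nlinarith
  · rw [min_eq_right h.le, Set.indicator_of_mem (Set.mem_Ioi.mpr h)]
    have h2 : Real.log (1 + z) ≤ Real.log (2 * z) :=
      Real.log_le_log (by linarith) (by linarith)
    rw [Real.log_mul (by norm_num) (by linarith)] at h2
    linarith

theorem AV_bounded_and_tendsto (a b σ : ℝ) (ha : 0 ≤ a) (hb : 0 < b) (hσ : 0 < σ)
    (ν : Measure ℝ) (hνsupp : ν (Set.Iic 0) = 0)
    (hν : ∫⁻ z in Set.Ioi (0 : ℝ), ENNReal.ofReal (min z 1) ∂ν < ⊤)
    (hνlog : ∫⁻ z in Set.Ioi (1 : ℝ), ENNReal.ofReal (Real.log z) ∂ν < ⊤) :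
    (∃ M : ℝ, ∀ x : ℝ, 0 ≤ x → |AV a b σ ν x| ≤ M) ∧
      Filter.Tendsto (AV a b σ ν) Filter.atTop (nhds (-b)) := by
  have hG : Integrable Gfun (ν.restrict (Set.Ioi 0)) := Gfun_integrable ν hν hνlog
  set C : ℝ := ∫ z in Set.Ioi (0:ℝ), Gfun z ∂ν with hC
  have hmeas : ∀ x : ℝ, AEStronglyMeasurable (fun z => Real.log (1 + z / (1 + x)))
      (ν.restrict (Set.Ioi 0)) := fun x =>
    (Real.measurable_log.comp
      (measurable_const.add (measurable_id.div_const _))).aestronglyMeasurable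
  have hbd : ∀ x : ℝ, 0 ≤ x → ∀ᵐ z ∂(ν.restrict (Set.Ioi 0)),
      ‖Real.log (1 + z / (1 + x))‖ ≤ Gfun z := fun x hx =>
    (ae_restrict_iff' measurableSet_Ioi).2 (ae_of_all _ fun z hz =>
      Gfun_bound (Set.mem_Ioi.mp hz) hx)
  have hint : ∀ x : ℝ, 0 ≤ x → Integrable (fun z => Real.log (1 + z / (1 + x)))
      (ν.restrict (Set.Ioi 0)) := fun x hx =>
    Integrable.mono' hG (hmeas x) (hbd x hx)
  -- bounds on the integral term
  have hInn : ∀ x : ℝ, 0 ≤ x → 0 ≤ ∫ z in Set.Ioi (0:ℝ), Real.log (1 + z / (1 + x)) ∂ν := by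
    intro x hx
    apply integral_nonneg_of_ae
    refine (ae_restrict_iff' measurableSet_Ioi).2 (ae_of_all _ fun z hz => ?_)
    have hz0 : 0 < z := Set.mem_Ioi.mp hz
    have h1x : (0:ℝ) < 1 + x := by linarith
    exact Real.log_nonneg (by nlinarith [div_nonneg hz0.le h1x.le])
  have hIle : ∀ x : ℝ, 0 ≤ x → (∫ z in Set.Ioi (0:ℝ), Real.log (1 + z / (1 + x)) ∂ν) ≤ C := by
    intro x hx
    apply integral_mono_ae (hint x hx) hG
    filter_upwards [hbd x hx] with z hz
    exact (le_abs_self _).trans (by rwa [Real.norm_eq_abs] at hz)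
  constructor
  · -- boundedness
    refine ⟨(a + b) + σ ^ 2 / 2 + C, fun x hx => ?_⟩
    have h1x : (0:ℝ) < 1 + x := by linarith
    unfold AV
    have h1 : |(a - b * x) / (1 + x)| ≤ a + b := by
      rw [abs_div, abs_of_pos h1x, div_le_iff₀ h1x]
      have : |a - b * x| ≤ a + b * x := by
        rw [abs_le]; constructor <;> nlinarith
      nlinarith
    have h2 : |σ ^ 2 * x / (2 * (1 + x) ^ 2)| ≤ σ ^ 2 / 2 := by
      rw [abs_of_nonneg (by positivity), div_le_div_iff₀ (by positivity) (by norm_num)]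
      nlinarith [sq_nonneg σ, sq_nonneg x]
    have h3 : |∫ z in Set.Ioi (0:ℝ), Real.log (1 + z / (1 + x)) ∂ν| ≤ C := by
      rw [abs_of_nonneg (hInn x hx)]; exact hIle x hx
    calc |(a - b * x) / (1 + x) - σ ^ 2 * x / (2 * (1 + x) ^ 2) +
          ∫ z in Set.Ioi (0:ℝ), Real.log (1 + z / (1 + x)) ∂ν|
        ≤ |(a - b * x) / (1 + x) - σ ^ 2 * x / (2 * (1 + x) ^ 2)| +
          |∫ z in Set.Ioi (0:ℝ), Real.log (1 + z / (1 + x)) ∂ν| := abs_add_le _ _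
      _ ≤ |(a - b * x) / (1 + x)| + |σ ^ 2 * x / (2 * (1 + x) ^ 2)| +
          |∫ z in Set.Ioi (0:ℝ), Real.log (1 + z / (1 + x)) ∂ν| := by
            gcongr; exact abs_sub _ _
      _ ≤ (a + b) + σ ^ 2 / 2 + C := by gcongr
  · -- limit
    have hT1 : Tendsto (fun x : ℝ => (a - b * x) / (1 + x)) atTop (nhds (-b)) := by
      have h0 : Tendsto (fun x : ℝ => (a + b) / (1 + x)) atTop (nhds 0) :=
        tendsto_const_nhds.div_atTop (tendsto_atTop_add_const_left _ 1 tendsto_id)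
      have := h0.const_add (-b)
      rw [add_zero] at this
      refine this.congr' ?_
      filter_upwards [eventually_gt_atTop (0:ℝ)] with x hx
      have h1x : (1:ℝ) + x ≠ 0 := by positivity
      field_simp
      ring
    have hT2 : Tendsto (fun x : ℝ => σ ^ 2 * x / (2 * (1 + x) ^ 2)) atTop (nhds 0) := by
      have hden : Tendsto (fun x : ℝ => 2 * (1 + x)) atTop atTop :=
        (tendsto_atTop_add_const_left atTop 1 tendsto_id).const_mul_atTop zero_lt_two
      have h0 : Tendsto (fun x : ℝ => σ ^ 2 / (2 * (1 + x))) atTop (nhds 0) :=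
        tendsto_const_nhds.div_atTop hden
      refine tendsto_of_tendsto_of_tendsto_of_le_of_le' tendsto_const_nhds h0 ?_ ?_
      · filter_upwards [eventually_ge_atTop (0:ℝ)] with x hx
        positivity
      · filter_upwards [eventually_ge_atTop (0:ℝ)] with x hx
        have h1x : (0:ℝ) < 1 + x := by linarith
        rw [div_le_div_iff₀ (by positivity) (by positivity)]
        nlinarith [sq_nonneg σ]
    have hT3 : Tendsto (fun x : ℝ => ∫ z in Set.Ioi (0:ℝ), Real.log (1 + z / (1 + x)) ∂ν)
        atTop (nhds 0) := by
      have := tendsto_integral_filter_of_dominated_convergence (μ := ν.restrict (Set.Ioi 0))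
        (F := fun x z => Real.log (1 + z / (1 + x))) (f := fun _ => (0:ℝ)) Gfun
        (Filter.Eventually.of_forall hmeas)
        (by filter_upwards [eventually_ge_atTop (0:ℝ)] with x hx; exact hbd x hx)
        hG
        (ae_of_all _ fun z => by
          have h1 : Tendsto (fun x : ℝ => z / (1 + x)) atTop (nhds 0) :=
            tendsto_const_nhds.div_atTop (tendsto_atTop_add_const_left _ 1 tendsto_id)
          have h2 : Tendsto (fun x : ℝ => 1 + z / (1 + x)) atTop (nhds 1) := by
            have := h1.const_add (1:ℝ); rwa [add_zero] at this
          have h3 := (Real.continuousAt_log one_ne_zero).tendsto.comp h2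
          rwa [Real.log_one] at h3)
      simpa using this
    have := (hT1.sub hT2).add hT3
    rw [sub_zero, add_zero] at this
    exact this
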